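/- In a quasitriangular Hopf algebra, uS(u) = S(u)u and this element is central in A. -/

import Mathlib

open TensorProduct HopfAlgebra

section MyAux
open Coalgebra
variable {k A : Type*} [CommRing k] [Ring A] [HopfAlgebra k A]

lemma myCounitLeft (x : A) (r : Repr k x (A × A)) :
    ∑ i ∈ r.index, counit (R := k) (r.left i) • r.right i = x := by
  have h := congrArg (TensorProduct.lid k A) (Coalgebra.sum_counit_tmul_eq r)
  rw [map_sum] at h
  simp only [TensorProduct.lid_tmul, one_smul] at h
  exact h

lemma myCounitRight (x : A) (r : Repr k x (A × A)) :
    ∑ i ∈ r.index, counit (R := k) (r.right i) • r.left i = x := by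
  have h := congrArg (TensorProduct.rid k A) (Coalgebra.sum_tmul_counit_eq r)
  rw [map_sum] at h
  simp only [TensorProduct.rid_tmul, one_smul] at h
  exact h

lemma myAntipodeOne : antipode (R := k) (1 : A) = 1 := by
  have h := mul_antipode_rTensor_comul_apply (R := k) (A := A) 1
  simpa [Algebra.TensorProduct.one_def] using h

lemma myAux1 (x : A) (r : Repr k x (A × A)) (r2 : ∀ i : r.ι, Repr k (r.right i) (A × A)) :
    ∑ i ∈ r.index, ∑ j ∈ (r2 i).index,
      (antipode (R := k) (r.left i) * (r2 i).left j) ⊗ₜ[k] (r2 i).right j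
      = (1 : A) ⊗ₜ[k] x := by
  have h3 := Coalgebra.sum_tmul_tmul_eq r (fun i => Coalgebra.Repr.arbitrary k (r.left i)) r2
  set f : A ⊗[k] A →ₗ[k] A :=
    LinearMap.mul' k A ∘ₗ (antipode (R := k)).rTensor A with hf
  set φ : A ⊗[k] (A ⊗[k] A) →ₗ[k] A ⊗[k] A :=
    (f.rTensor A) ∘ₗ (TensorProduct.assoc k A A A).symm.toLinearMap with hφ
  have hφt : ∀ a b c : A, φ (a ⊗ₜ (b ⊗ₜ c)) = (antipode (R := k) a * b) ⊗ₜ c := by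
    intro a b c
    simp [hφ, hf]
  have h4 := congrArg φ h3
  rw [map_sum, map_sum] at h4
  simp only [map_sum, hφt] at h4
  rw [← h4]
  have : ∀ i ∈ r.index,
      ∑ j ∈ (Coalgebra.Repr.arbitrary k (r.left i)).index,
        (antipode (R := k) ((Coalgebra.Repr.arbitrary k (r.left i)).left j) *
          (Coalgebra.Repr.arbitrary k (r.left i)).right j) ⊗ₜ[k] r.right i
      = counit (R := k) (r.left i) • ((1 : A) ⊗ₜ[k] r.right i) := by
    intro i _
    rw [← TensorProduct.sum_tmul, HopfAlgebra.sum_antipode_mul_eq_algebraMap_counit,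
      Algebra.algebraMap_eq_smul_one, TensorProduct.smul_tmul']
  rw [Finset.sum_congr rfl this]
  simp only [← TensorProduct.tmul_smul]
  rw [← TensorProduct.tmul_sum, myCounitLeft]

/-- Representation of a product from representations of the factors. -/
def myMulRepr (v w : A) (rv : Repr k v (A × A)) (rw : Repr k w (A × A)) : Repr k (v * w) ((A × A) × (A × A)) where
  index := rv.index ×ˢ rw.index
  left := fun p => rv.left p.1 * rw.left p.2
  right := fun p => rv.right p.1 * rw.right p.2
  eq := by
    rw [Bialgebra.comul_mul, ← rv.eq, ← rw.eq, Finset.sum_mul_sum]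
    rw [Finset.sum_product]
    simp [Algebra.TensorProduct.tmul_mul_tmul]

lemma myAux2 (v w : A) (rv : Repr k v (A × A)) (rw : Repr k w (A × A)) :
    ∑ j ∈ rv.index, ∑ q ∈ rw.index,
      (rv.left j * rw.left q) * antipode (R := k) (rv.right j * rw.right q)
      = algebraMap k A (counit (R := k) v * counit (R := k) w) := by
  have h := HopfAlgebra.sum_mul_antipode_eq_algebraMap_counit (R := k) (myMulRepr v w rv rw)
  rw [Bialgebra.counit_mul] at h
  rw [← h, myMulRepr, Finset.sum_product]

noncomputable def myG (s t v : A) : A ⊗[k] A →ₗ[k] A :=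
  TensorProduct.lift (LinearMap.mk₂ k
    (fun c d => s * (c * (t * antipode (R := k) (d * v))))
    (by intros; simp [add_mul, mul_add])
    (by intros; simp [smul_mul_assoc, mul_smul_comm])
    (by intros; simp [add_mul, mul_add])
    (by intros; simp [smul_mul_assoc, mul_smul_comm]))

@[simp] lemma myG_tmul (s t v c d : A) :
    myG (k := k) s t v (c ⊗ₜ[k] d) = s * (c * (t * antipode (R := k) (d * v))) := rfl

noncomputable def myH (x : A) : A ⊗[k] A →ₗ[k] A :=
  TensorProduct.lift (LinearMap.mk₂ k
    (fun c d => c * antipode (R := k) (x * d))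
    (by intros; simp [add_mul, mul_add])
    (by intros; simp [smul_mul_assoc, mul_smul_comm])
    (by intros; simp [add_mul, mul_add])
    (by intros; simp [smul_mul_assoc, mul_smul_comm]))

@[simp] lemma myH_tmul (x c d : A) :
    myH (k := k) x (c ⊗ₜ[k] d) = c * antipode (R := k) (x * d) := rfl

lemma myAntipodeMul (x y : A) :
    antipode (R := k) (x * y) = antipode (R := k) y * antipode (R := k) x := by
  have rx : Repr k x (A × A) := Repr.arbitrary k x
  have ry : Repr k y (A × A) := Repr.arbitrary k y
  have rx2 : ∀ i : rx.ι, Repr k (rx.right i) (A × A) := fun i => Repr.arbitrary k _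
  have ry2 : ∀ p : ry.ι, Repr k (ry.right p) (A × A) := fun p => Repr.arbitrary k _
  -- the big sum
  have hstep1 :
      (∑ p ∈ ry.index, ∑ q ∈ (ry2 p).index, ∑ i ∈ rx.index, ∑ j ∈ (rx2 i).index,
        antipode (R := k) (ry.left p) * (antipode (R := k) (rx.left i) *
          ((rx2 i).left j * ((ry2 p).left q *
            antipode (R := k) ((rx2 i).right j * (ry2 p).right q)))))
      = antipode (R := k) (x * y) := by
    have h1 : ∀ p q,
        (∑ i ∈ rx.index, ∑ j ∈ (rx2 i).index,
          antipode (R := k) (ry.left p) * (antipode (R := k) (rx.left i) *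
            ((rx2 i).left j * ((ry2 p).left q *
              antipode (R := k) ((rx2 i).right j * (ry2 p).right q)))))
        = antipode (R := k) (ry.left p) * ((ry2 p).left q *
            antipode (R := k) (x * (ry2 p).right q)) := by
      intro p q
      have h := congrArg
        (myG (antipode (R := k) (ry.left p)) ((ry2 p).left q) ((ry2 p).right q))
        (myAux1 x rx rx2)
      rw [map_sum] at h
      simp only [map_sum, myG_tmul] at h
      simpa [mul_assoc] using h
    rw [Finset.sum_congr rfl fun p _ => Finset.sum_congr rfl fun q _ => h1 p q]
    have h2 := congrArg (myH x) (myAux1 y ry ry2)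
    rw [map_sum] at h2
    simp only [map_sum, myH_tmul] at h2
    simpa [mul_assoc] using h2
  have hstep2 :
      (∑ p ∈ ry.index, ∑ q ∈ (ry2 p).index, ∑ i ∈ rx.index, ∑ j ∈ (rx2 i).index,
        antipode (R := k) (ry.left p) * (antipode (R := k) (rx.left i) *
          ((rx2 i).left j * ((ry2 p).left q *
            antipode (R := k) ((rx2 i).right j * (ry2 p).right q)))))
      = antipode (R := k) y * antipode (R := k) x := by
    -- swap the middle sums:  Σ_q Σ_i  →  Σ_i Σ_q
    have hswap : ∀ p ∈ ry.index,
        (∑ q ∈ (ry2 p).index, ∑ i ∈ rx.index, ∑ j ∈ (rx2 i).index,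
          antipode (R := k) (ry.left p) * (antipode (R := k) (rx.left i) *
            ((rx2 i).left j * ((ry2 p).left q *
              antipode (R := k) ((rx2 i).right j * (ry2 p).right q)))))
        = ∑ i ∈ rx.index, ∑ j ∈ (rx2 i).index, ∑ q ∈ (ry2 p).index,
            antipode (R := k) (ry.left p) * (antipode (R := k) (rx.left i) *
              ((rx2 i).left j * ((ry2 p).left q *
                antipode (R := k) ((rx2 i).right j * (ry2 p).right q)))) := by
      intro p _
      rw [Finset.sum_comm]
      exact Finset.sum_congr rfl fun i _ => Finset.sum_comm ..
    rw [Finset.sum_congr rfl hswap]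
    have key : ∀ p i,
        (∑ j ∈ (rx2 i).index, ∑ q ∈ (ry2 p).index,
          antipode (R := k) (ry.left p) * (antipode (R := k) (rx.left i) *
            ((rx2 i).left j * ((ry2 p).left q *
              antipode (R := k) ((rx2 i).right j * (ry2 p).right q)))))
        = antipode (R := k) (ry.left p) * (antipode (R := k) (rx.left i) *
            algebraMap k A (counit (R := k) (rx.right i) * counit (R := k) (ry.right p))) := by
      intro p i
      rw [← myAux2 (rx.right i) (ry.right p) (rx2 i) (ry2 p)]
      simp only [Finset.mul_sum, mul_assoc]
    rw [Finset.sum_congr rfl fun p _ => Finset.sum_congr rfl fun i _ => key p i]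
    have hx : antipode (R := k) x
        = ∑ i ∈ rx.index, counit (R := k) (rx.right i) • antipode (R := k) (rx.left i) := by
      conv_lhs => rw [← myCounitRight x rx]
      rw [map_sum]
      simp only [map_smul]
    have hy : antipode (R := k) y
        = ∑ p ∈ ry.index, counit (R := k) (ry.right p) • antipode (R := k) (ry.left p) := by
      conv_lhs => rw [← myCounitRight y ry]
      rw [map_sum]
      simp only [map_smul]
    rw [hx, hy, Finset.sum_mul_sum]
    refine Finset.sum_congr rfl fun p _ => Finset.sum_congr rfl fun i _ => ?_
    simp only [Algebra.algebraMap_eq_smul_one, smul_mul_assoc, mul_smul_comm, smul_smul,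
      mul_one]
  rw [← hstep1, hstep2]



end MyAux

/-- In a quasitriangular Hopf algebra, `u S(u) = S(u) u` and this element is central in `A`. -/
theorem drinfeld_uSu_central
    {k A : Type*} [CommRing k] [Ring A] [HopfAlgebra k A]
    (R Rinv : A ⊗[k] A)
    (hR : R * Rinv = 1) (hR' : Rinv * R = 1)
    (hQT : ∀ x : A, R * Bialgebra.comulAlgHom k A x =
      (Algebra.TensorProduct.comm k A A) (Bialgebra.comulAlgHom k A x) * R)
    (hhex1 : (Algebra.TensorProduct.assoc k k k A A A)
        ((Algebra.TensorProduct.map (Bialgebra.comulAlgHom k A) (AlgHom.id k A)) R) =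
      (Algebra.TensorProduct.map (AlgHom.id k A)
          (Algebra.TensorProduct.includeRight : A →ₐ[k] A ⊗[k] A)) R *
        (Algebra.TensorProduct.includeRight : (A ⊗[k] A) →ₐ[k] A ⊗[k] (A ⊗[k] A)) R)
    (hhex2 : (Algebra.TensorProduct.map (AlgHom.id k A) (Bialgebra.comulAlgHom k A)) R =
      (Algebra.TensorProduct.map (AlgHom.id k A)
          (Algebra.TensorProduct.includeRight : A →ₐ[k] A ⊗[k] A)) R *
        (Algebra.TensorProduct.map (AlgHom.id k A)
          (Algebra.TensorProduct.includeLeft : A →ₐ[k] A ⊗[k] A)) R)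
    {ι : Type*} [Fintype ι] (a b : ι → A) (hab : R = ∑ i, a i ⊗ₜ[k] b i)
    (u uinv : A) (hu : u = ∑ i, antipode (R := k) (a i) * b i)
    (huinv : u * uinv = 1) (huinv' : uinv * u = 1)
    (hS2 : ∀ ξ : A, antipode (R := k) (antipode (R := k) ξ) = u * ξ * uinv)
    :
    u * antipode (R := k) u = antipode (R := k) u * u ∧
      ∀ x : A, (u * antipode (R := k) u) * x = x * (u * antipode (R := k) u) := by
  have hSu2 : antipode (R := k) (antipode (R := k) u) = u := by
    rw [hS2, mul_assoc, huinv, mul_one]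
  have h1 : u * antipode (R := k) u = antipode (R := k) u * u := by
    have h := hS2 (antipode (R := k) u)
    rw [hSu2] at h
    have h' := congrArg (· * u) h
    simp only [mul_assoc, huinv', mul_one] at h'
    exact h'.symm
  have hSuinv : antipode (R := k) u * antipode (R := k) uinv = 1 := by
    have h := myAntipodeMul (k := k) uinv u
    rw [huinv', myAntipodeOne] at h
    exact h.symm
  have hx0 : ∀ x : A, antipode (R := k) (antipode (R := k) (uinv * x * u)) = x := by
    intro x
    rw [hS2]
    simp only [mul_assoc]
    rw [huinv, mul_one, ← mul_assoc, huinv, one_mul]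
  have key : ∀ ξ : A, u * antipode (R := k) ξ * uinv =
      antipode (R := k) uinv * (antipode (R := k) ξ * antipode (R := k) u) := by
    intro ξ
    have h5 := congrArg (antipode (R := k)) (hS2 ξ)
    rw [myAntipodeMul, myAntipodeMul] at h5
    rw [hS2] at h5
    exact h5
  have cent : ∀ x : A, (antipode (R := k) u * u) * x = x * (antipode (R := k) u * u) := by
    intro x
    have e := key (antipode (R := k) (uinv * x * u))
    rw [hx0 x] at e
    have e2 := congrArg (fun z : A => antipode (R := k) u * (z * u)) e
    have l : antipode (R := k) u * ((u * x * uinv) * u) = (antipode (R := k) u * u) * x := by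
      simp only [mul_assoc, huinv', mul_one]
    have r : antipode (R := k) u *
        ((antipode (R := k) uinv * (x * antipode (R := k) u)) * u)
        = x * (antipode (R := k) u * u) := by
      simp only [mul_assoc]
      rw [← mul_assoc, hSuinv, one_mul]
    rw [l, r] at e2
    exact e2
  refine ⟨h1, fun x => ?_⟩
  rw [h1]
  exact cent x
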